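/- arXiv:2510.19815 — 4 statements merged into one kernel-verified Lean document; each statement's English description precedes it below -/
import Mathlib

section
/- Let W[1..m] be a sequence of m ≥ 1 binary strings of length ℓ ≥ 1, with s(i) as in the definition of SeqToString, and let T = SeqToString_ℓ(W). Fix X ∈ {0,1}^{≤ℓ} and b, e ∈ [0..m], and set P₁ = rev(X)·4·s(b), P₂ = rev(X)·4·s(e), and β = ℓ + ⌊log₂ m⌋ + 2. Let 𝒫 = { i ∈ (b..e] : X is a prefix of W[i] } and 𝒬 = LexRange(P₁,P₂,T). Then (1) 𝒫 = { ⌈ j / β ⌉ : j ∈ 𝒬 }, and (2) |𝒫| = |𝒬|. -/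
/-- Strict lexicographic order on strings: `U ≺ V` iff `U` is a proper prefix of `V`,
or `U` and `V` first differ at a position where `U` has the smaller symbol. -/
def LexLt {α : Type*} [LT α] (U V : List α) : Prop := List.Lex (· < ·) U V

/-- Non-strict lexicographic order on strings. -/
def LexLe {α : Type*} [LT α] (U V : List α) : Prop := LexLt U V ∨ U = V

/-- The suffix `T[j..|T|]` of `T` (1-based index `j`). -/
def Suf {α : Type*} (T : List α) (j : ℕ) : List α := T.drop (j - 1)

/-- `Occ P T` is the set of starting positions (1-based) of occurrences of `P` in `T`. -/
def Occ {α : Type*} (P T : List α) : Set ℕ :=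
  { j | 1 ≤ j ∧ j + P.length ≤ T.length + 1 ∧ (Suf T j).take P.length = P }

/-- `RangeBeg P T` = number of suffixes of `T` lexicographically smaller than `P`. -/
noncomputable def RangeBeg {α : Type*} [LT α] (P T : List α) : ℕ :=
  { j | 1 ≤ j ∧ j ≤ T.length ∧ LexLt (Suf T j) P }.ncard

/-- `RangeEnd P T = RangeBeg P T + |Occ P T|`. -/
noncomputable def RangeEnd {α : Type*} [LT α] (P T : List α) : ℕ :=
  RangeBeg P T + (Occ P T).ncard

/-- `LexRange P₁ P₂ T` = positions `j ∈ [1..|T|]` with `P₁ ⪯ T[j..|T|] ≺ P₂`. -/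
def LexRange {α : Type*} [LT α] (P₁ P₂ T : List α) : Set ℕ :=
  { j | 1 ≤ j ∧ j ≤ T.length ∧ LexLe P₁ (Suf T j) ∧ LexLt (Suf T j) P₂ }

/-- `sa` is the suffix array of `T` (1-based): a permutation of `[1..|T|]` listing the
starting positions of the suffixes of `T` in increasing lexicographic order. -/
def IsSuffixArray {α : Type*} [LT α] (T : List α) (sa : ℕ → ℕ) : Prop :=
  (∀ i, 1 ≤ i → i ≤ T.length → 1 ≤ sa i ∧ sa i ≤ T.length) ∧
  (∀ j, 1 ≤ j → j ≤ T.length → ∃ i, 1 ≤ i ∧ i ≤ T.length ∧ sa i = j) ∧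
  (∀ i j, 1 ≤ i → i < j → j ≤ T.length → LexLt (Suf T (sa i)) (Suf T (sa j)))

/-- `binSym k x` : the length-`k` binary representation of `x` (MSB first, leading zeros). -/
def binSym (k x : ℕ) : List ℕ := (List.range k).map fun i => x / 2 ^ (k - 1 - i) % 2

/-- `binStr k S` = `bin_k(S[1]) · bin_k(S[2]) · … · bin_k(S[|S|])`. -/
def binStr (k : ℕ) (S : List ℕ) : List ℕ := (S.map (binSym k)).flatten

/-- `ebinSym k x = 1^{k+1} · 0 · bin_k(x) · 0`. -/
def ebinSym (k x : ℕ) : List ℕ := List.replicate (k + 1) 1 ++ [0] ++ binSym k x ++ [0]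

/-- `ebinStr k S` = concatenation of `ebin_k(S[i])` for `i = 1, …, |S|`. -/
def ebinStr (k : ℕ) (S : List ℕ) : List ℕ := (S.map (ebinSym k)).flatten

/-- `sEnc k i` : length-`k` base-2 representation of `i` with `0 ↦ 2` and `1 ↦ 3`. -/
def sEnc (k i : ℕ) : List ℕ := (binSym k i).map (· + 2)

/-- `SeqToString m W = ⊙_{i=1}^{m} rev(W[i]) · 4 · s(i-1)` with `k = 1 + ⌊log₂ m⌋`. -/
def SeqToString (m : ℕ) (W : ℕ → List ℕ) : List ℕ :=
  ((List.range m).map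
    fun i => (W (i + 1)).reverse ++ [4] ++ sEnc (1 + Nat.log 2 m) i).flatten

/-- `PermSeqToString m π W = ⊙_{i=1}^{m} rev(W[π[i]]) · 4 · s(π[i]-1)`. -/
def PermSeqToString (m : ℕ) (perm : ℕ → ℕ) (W : ℕ → List ℕ) : List ℕ :=
  ((List.range m).map
    fun i => (W (perm (i + 1))).reverse ++ [4]
      ++ sEnc (1 + Nat.log 2 m) (perm (i + 1) - 1)).flatten

/-- `PrefixRank W j X = |{ i ∈ [1..j] : X is a prefix of W[i] }|`. -/
noncomputable def PrefixRank {α : Type*} (W : ℕ → List α) (j : ℕ) (X : List α) : ℕ :=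
  { i | 1 ≤ i ∧ i ≤ j ∧ X <+: W i }.ncard

/-- `p` is the `r`-th smallest element of the set `A ⊆ ℕ`. -/
def IsKthSmallest (A : Set ℕ) (r p : ℕ) : Prop :=
  p ∈ A ∧ (A ∩ Set.Iic p).ncard = r

/-- Ceiling division `⌈a / b⌉` of positive naturals. -/
def cdiv (a b : ℕ) : ℕ := (a + b - 1) / b

/-- Alphabet inversion: `inv_σ(S)[i] = σ - 1 - S[i]`. -/
def invStr (σ : ℕ) (S : List ℕ) : List ℕ := S.map fun a => σ - 1 - a

/-- `p` is a period of `S`: `1 ≤ p ≤ |S|` and `S[i] = S[i+p]` for all `i ∈ [1..|S|-p]`. -/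
def IsPeriod {α : Type*} (S : List α) (p : ℕ) : Prop :=
  1 ≤ p ∧ p ≤ S.length ∧ S.drop p <+: S

/-- `per S`: the smallest period of `S`. -/
noncomputable def per {α : Type*} (S : List α) : ℕ := sInf { p | IsPeriod S p }

/-- `P` is `τ`-periodic: `|P| ≥ 3τ - 1` and `per(P[1..3τ-1]) ≤ τ/3`. -/
noncomputable def TauPeriodic {α : Type*} (τ : ℕ) (P : List α) : Prop :=
  3 * τ ≤ P.length + 1 ∧ 3 * per (P.take (3 * τ - 1)) ≤ τ

/-- `R(τ,T) = { i ∈ [1..n-3τ+2] : per(T[i..i+3τ-2]) ≤ τ/3 }`. -/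
noncomputable def Rset {α : Type*} (τ : ℕ) (T : List α) : Set ℕ :=
  { i | 1 ≤ i ∧ i + 3 * τ ≤ T.length + 2 ∧ 3 * per ((Suf T i).take (3 * τ - 1)) ≤ τ }

/-- `S` is a `τ`-synchronizing set of `T` (consistency and density conditions). -/
noncomputable def IsSyncSet {α : Type*} (τ : ℕ) (T : List α) (S : Set ℕ) : Prop :=
  (∀ j ∈ S, 1 ≤ j ∧ j + 2 * τ ≤ T.length + 1) ∧
  (∀ i j, 1 ≤ i → i + 2 * τ ≤ T.length + 1 → 1 ≤ j → j + 2 * τ ≤ T.length + 1 →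
    (Suf T i).take (2 * τ) = (Suf T j).take (2 * τ) → (i ∈ S ↔ j ∈ S)) ∧
  (∀ i, 1 ≤ i → i + 3 * τ ≤ T.length + 2 → (S ∩ Set.Ico i (i + τ) = ∅ ↔ i ∈ Rset τ T))

/-- `succ_S(x) = min { x' ∈ S : x' ≥ x }`. -/
noncomputable def succS (S : Set ℕ) (x : ℕ) : ℕ := sInf (S ∩ Set.Ici x)

/-- `DistPrefixes(τ,T,S) = { T[j..succ_S(j)+2τ) : j ∈ [1..n-3τ+2] \ R(τ,T) }`. -/
noncomputable def DistPrefixes {α : Type*} (τ : ℕ) (T : List α) (S : Set ℕ) : Set (List α) :=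
  (fun j => (Suf T j).take (succS S j + 2 * τ - j)) ''
    { j | 1 ≤ j ∧ j + 3 * τ ≤ T.length + 2 ∧ j ∉ Rset τ T }

/-- `r` is the value of the prefix RMQ: the smallest index `i ∈ (b..e]` with `X` a prefix of
`W[i]` minimizing `A[i]` (ties broken towards the smaller index). -/
def IsPrefixRMQ (A : ℕ → ℤ) (W : ℕ → List ℕ) (b e : ℕ) (X : List ℕ) (r : ℕ) : Prop :=
  (b < r ∧ r ≤ e ∧ X <+: W r) ∧
  (∀ i, b < i → i ≤ e → X <+: W i → A r ≤ A i) ∧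
  (∀ i, b < i → i ≤ e → X <+: W i → A i = A r → r ≤ i)

/-! ### Auxiliary lemmas -/

section Aux
open List

private lemma lexAux_append_right {A B t : List ℕ} (h : List.Lex (·<·) A B) :
    List.Lex (·<·) A (B ++ t) := by
  induction h with
  | nil => exact List.Lex.nil
  | @cons a l₁ l₂ _ ih => exact List.Lex.cons ih
  | rel h => exact List.Lex.rel h

private lemma lexAux_append_left {A B t : List ℕ} (h : List.Lex (·<·) A B)
    (hlen : B.length ≤ A.length) : List.Lex (·<·) (A ++ t) B := by
  induction h with
  | nil => simp at hlen
  | @cons a l₁ l₂ _ ih => exact List.Lex.cons (ih (by simpa using hlen))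
  | rel h => exact List.Lex.rel h

private lemma lexAux_self_append {A t : List ℕ} (ht : t ≠ []) :
    List.Lex (·<·) A (A ++ t) := by
  induction A with
  | nil => cases t with
    | nil => exact absurd rfl ht
    | cons a t' => exact List.Lex.nil
  | cons a A' ih => exact List.Lex.cons ih

private lemma lexAux_not_append_self (A t : List ℕ) :
    ¬ List.Lex (·<·) (A ++ t) A := by
  induction A with
  | nil => intro h; cases h
  | cons a A' ih =>
    intro h
    cases h with
    | cons h => exact ih h
    | rel h => exact lt_irrefl _ h

private lemma lexAux_append_left_iff (C A B : List ℕ) :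
    List.Lex (·<·) (C ++ A) (C ++ B) ↔ List.Lex (·<·) A B := by
  induction C with
  | nil => rfl
  | cons c C' ih => simpa [List.lex_cons_iff] using ih

private lemma lexAux_prefix_or (C U : List ℕ) :
    C <+: U ∨ (∀ A, List.Lex (·<·) U (C ++ A)) ∨ (∀ A, List.Lex (·<·) (C ++ A) U) := by
  induction C generalizing U with
  | nil => exact Or.inl (nil_prefix)
  | cons c C' ih =>
    cases U with
    | nil => exact Or.inr (Or.inl fun A => List.Lex.nil)
    | cons u U' =>
      rcases lt_trichotomy u c with h | h | h
      · exact Or.inr (Or.inl fun A => List.Lex.rel h)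
      · subst h
        rcases ih U' with h | h | h
        · exact Or.inl (List.cons_prefix_cons.2 ⟨rfl, h⟩)
        · exact Or.inr (Or.inl fun A => List.Lex.cons (h A))
        · exact Or.inr (Or.inr fun A => List.Lex.cons (h A))
      · exact Or.inr (Or.inr fun A => List.Lex.rel h)

private lemma lexAux_cons_iff' (a b : ℕ) (A B : List ℕ) :
    List.Lex (·<·) (a :: A) (b :: B) ↔ a < b ∨ (a = b ∧ List.Lex (·<·) A B) := by
  constructor
  · intro h
    cases h with
    | cons h => exact Or.inr ⟨rfl, h⟩
    | rel h => exact Or.inl h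
  · rintro (h | ⟨rfl, h⟩)
    · exact List.Lex.rel h
    · exact List.Lex.cons h

private lemma div_lt_imp_lt {k u v : ℕ} (h : u / 2 ^ k < v / 2 ^ k) : u < v :=
  calc u < (u / 2 ^ k + 1) * 2 ^ k :=
        (Nat.div_lt_iff_lt_mul (by positivity)).1 (Nat.lt_succ_self _)
    _ ≤ v / 2 ^ k * 2 ^ k := Nat.mul_le_mul_right _ h
    _ ≤ v := Nat.div_mul_le_self _ _

private lemma binSym_succ (k x : ℕ) :
    binSym (k + 1) x = (x / 2 ^ k % 2) :: binSym k (x % 2 ^ k) := by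
  unfold binSym
  rw [List.range_succ_eq_map, List.map_cons, List.map_map]
  congr 1
  apply List.map_congr_left
  intro a ha
  simp only [List.mem_range] at ha
  simp only [Function.comp_apply]
  show x / 2 ^ (k + 1 - 1 - (a + 1)) % 2 = x % 2 ^ k / 2 ^ (k - 1 - a) % 2
  have h2 : ∀ y j, (y.testBit j).toNat = y / 2 ^ j % 2 := Nat.toNat_testBit
  have h1 : k + 1 - 1 - (a + 1) = k - 1 - a := by omega
  rw [h1, ← h2, ← h2, Nat.testBit_mod_two_pow]
  simp [show k - 1 - a < k by omega]

private lemma binLex (k : ℕ) : ∀ x y, x < 2 ^ k → y < 2 ^ k →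
    (List.Lex (·<·) (binSym k x) (binSym k y) ↔ x < y) := by
  induction k with
  | zero =>
    intro x y hx hy
    interval_cases x
    interval_cases y
    simp only [binSym, List.range_zero, List.map_nil]
    constructor
    · intro h; cases h
    · omega
  | succ k ih =>
    intro x y hx hy
    have hx2 : x % 2 ^ k < 2 ^ k := Nat.mod_lt _ (Nat.pow_pos (by norm_num))
    have hy2 : y % 2 ^ k < 2 ^ k := Nat.mod_lt _ (Nat.pow_pos (by norm_num))
    rw [binSym_succ, binSym_succ, lexAux_cons_iff', ih _ _ hx2 hy2]
    have hxm : x / 2 ^ k % 2 = x / 2 ^ k := Nat.mod_eq_of_lt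
      (Nat.div_lt_of_lt_mul (by rw [pow_succ] at hx; omega))
    have hym : y / 2 ^ k % 2 = y / 2 ^ k := Nat.mod_eq_of_lt
      (Nat.div_lt_of_lt_mul (by rw [pow_succ] at hy; omega))
    rw [hxm, hym]
    constructor
    · rintro (h | ⟨h, h2⟩)
      · exact div_lt_imp_lt h
      · have e1 := Nat.div_add_mod x (2 ^ k)
        have e2 := Nat.div_add_mod y (2 ^ k)
        rw [h] at e1
        omega
    · intro hlt
      rcases lt_trichotomy (x / 2 ^ k) (y / 2 ^ k) with h | h | h
      · exact Or.inl h
      · refine Or.inr ⟨h, ?_⟩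
        have e1 := Nat.div_add_mod x (2 ^ k)
        have e2 := Nat.div_add_mod y (2 ^ k)
        rw [h] at e1
        omega
      · exact absurd (div_lt_imp_lt h) (by omega)

private lemma lex_map_add2 : ∀ A B : List ℕ,
    List.Lex (·<·) (A.map (· + 2)) (B.map (· + 2)) ↔ List.Lex (·<·) A B := by
  intro A
  induction A with
  | nil =>
    intro B
    cases B with
    | nil => constructor <;> (intro h; cases h)
    | cons b B' =>
      simp only [List.map_nil, List.map_cons]
      exact ⟨fun _ => List.Lex.nil, fun _ => List.Lex.nil⟩
  | cons a A' ih =>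
    intro B
    cases B with
    | nil => constructor <;> (intro h; cases h)
    | cons b B' =>
      simp only [List.map_cons]
      rw [lexAux_cons_iff', lexAux_cons_iff', ih B']
      simp

private lemma sEncLex (k x y : ℕ) (hx : x < 2 ^ k) (hy : y < 2 ^ k) :
    List.Lex (·<·) (sEnc k x) (sEnc k y) ↔ x < y := by
  rw [sEnc, sEnc, lex_map_add2, binLex k x y hx hy]

private lemma sEnc_inj (k x y : ℕ) (hx : x < 2 ^ k) (hy : y < 2 ^ k)
    (h : sEnc k x = sEnc k y) : x = y := by
  by_contra hne
  rcases Nat.lt_or_ge x y with hl | hl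
  · have := (sEncLex k x y hx hy).2 hl
    rw [h] at this
    exact irrefl_of (List.Lex (·<·)) _ this
  · have hl2 : y < x := by omega
    have := (sEncLex k y x hy hx).2 hl2
    rw [h] at this
    exact irrefl_of (List.Lex (·<·)) _ this

private lemma sEnc_length (k x : ℕ) : (sEnc k x).length = k := by simp [sEnc, binSym]

private lemma sEnc_mem (k x : ℕ) : ∀ a ∈ sEnc k x, a = 2 ∨ a = 3 := by
  intro a ha
  simp only [sEnc, binSym, List.mem_map, List.mem_range] at ha
  obtain ⟨c, ⟨i, _, rfl⟩, rfl⟩ := ha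
  omega

private lemma flatten_len (β : ℕ) : ∀ L : List (List ℕ), (∀ l ∈ L, l.length = β) →
    L.flatten.length = L.length * β := by
  intro L
  induction L with
  | nil => simp
  | cons l L' ih =>
    intro h
    rw [List.flatten_cons, List.length_append, ih (fun x hx => h x (by simp [hx])),
      h l (by simp)]
    simp [Nat.add_mul, Nat.add_comm]

private lemma flatten_drop (β : ℕ) : ∀ (L : List (List ℕ)), (∀ l ∈ L, l.length = β) →
    ∀ i, L.flatten.drop (i * β) = (L.drop i).flatten := by
  intro L
  induction L with
  | nil => simp
  | cons l L' ih =>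
    intro h i
    cases i with
    | zero => simp
    | succ i =>
      rw [List.flatten_cons, List.drop_append]
      have hl : l.length = β := h l (by simp)
      have h1 : (i+1) * β - l.length = i * β := by
        rw [hl]; rw [Nat.add_mul]; omega
      have h2 : List.drop ((i+1)*β) l = [] := by
        apply List.drop_eq_nil_of_le
        rw [hl]; nlinarith
      rw [h1, h2, ih (fun x hx => h x (by simp [hx])) i]
      simp

private lemma cdiv_eq' (q r β : ℕ) (h2 : r < β) : cdiv (q * β + r + 1) β = q + 1 := by
  rw [cdiv]
  have h3 : q * β + r + 1 + β - 1 = (r + β) + q * β := by omega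
  rw [h3, Nat.add_mul_div_right _ _ (by omega : 0 < β)]
  have h4 : (r + β) / β = 1 := Nat.div_eq_of_lt_le (by omega) (by omega)
  rw [h4]; omega

end Aux
private lemma keyLem (m ℓ k β : ℕ) (hk : k = 1 + Nat.log 2 m) (hβ : β = ℓ + Nat.log 2 m + 2)
    (hm : 1 ≤ m) (hℓ : 1 ≤ ℓ) (W : ℕ → List ℕ)
    (hWlen : ∀ i, 1 ≤ i → i ≤ m → (W i).length = ℓ)
    (hWbin : ∀ i, 1 ≤ i → i ≤ m → ∀ a ∈ W i, a < 2)
    (X : List ℕ) (hXlen : X.length ≤ ℓ)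
    (b e : ℕ) (hb : b ≤ m) (he : e ≤ m) (j : ℕ) :
    j ∈ LexRange (X.reverse ++ [4] ++ sEnc k b) (X.reverse ++ [4] ++ sEnc k e)
      (SeqToString m W) ↔
    ∃ q, q < m ∧ b ≤ q ∧ q < e ∧ X <+: W (q + 1) ∧ j = q * β + (ℓ - X.length) + 1 := by
  have hβK : β = ℓ + 1 + k := by omega
  have hm2 : m < 2 ^ k := by
    rw [hk, Nat.add_comm]
    exact Nat.lt_pow_succ_log_self (by norm_num) m
  have hb2 : b < 2 ^ k := by omega
  have he2 : e < 2 ^ k := by omega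
  have hβpos : 0 < β := by omega
  set T := SeqToString m W with hTdef
  have hTflat : T = ((List.range m).map
      (fun q => (W (q+1)).reverse ++ [4] ++ sEnc k q)).flatten := by
    rw [hk]; rfl
  have hblen : ∀ q, q < m → ((W (q+1)).reverse ++ [4] ++ sEnc k q).length = β := by
    intro q hq
    simp [hWlen (q+1) (by omega) (by omega), sEnc_length]
    omega
  have hall : ∀ l ∈ (List.range m).map (fun q => (W (q+1)).reverse ++ [4] ++ sEnc k q),
      l.length = β := by
    intro l hl
    simp only [List.mem_map, List.mem_range] at hl
    obtain ⟨q', hq', rfl⟩ := hl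
    exact hblen q' hq'
  have hTlen : T.length = m * β := by
    rw [hTflat, flatten_len β _ hall]
    simp
  have hdropq : ∀ q, q < m → T.drop (q * β) =
      ((W (q+1)).reverse ++ [4] ++ sEnc k q) ++ T.drop ((q+1) * β) := by
    intro q hq
    rw [hTflat, flatten_drop β _ hall, flatten_drop β _ hall]
    rw [List.drop_eq_getElem_cons (by simpa using hq), List.flatten_cons]
    congr 1
    simp
  have hsuf : ∀ q, q < m → ∀ d, d ≤ ℓ → T.drop (q * β + d) =
      (W (q+1)).reverse.drop d ++ [4] ++ sEnc k q ++ T.drop ((q+1) * β) := by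
    intro q hq d hd
    have hrl : (W (q+1)).reverse.length = ℓ := by
      rw [List.length_reverse]; exact hWlen (q+1) (by omega) (by omega)
    have key1 : T.drop (q * β) = (W (q+1)).reverse.take d ++
        ((W (q+1)).reverse.drop d ++ [4] ++ sEnc k q ++ T.drop ((q+1) * β)) := by
      conv_lhs => rw [hdropq q hq, ← List.take_append_drop d (W (q+1)).reverse]
      simp only [List.append_assoc]
    rw [← List.drop_drop, key1, List.drop_left' (by simp [hrl]; omega)]
  have hchar4 : ∀ p, T[p]? = some 4 → ∃ q, q < m ∧ p = q * β + ℓ := by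
    intro p hp
    have hplt : p < T.length := by
      by_contra h
      rw [List.getElem?_eq_none (by omega)] at hp
      simp at hp
    rw [hTlen] at hplt
    obtain ⟨q, o, hqm, hoβ, rfl⟩ : ∃ q o, q < m ∧ o < β ∧ p = q * β + o := by
      refine ⟨p / β, p % β, (Nat.div_lt_iff_lt_mul hβpos).2 hplt,
        Nat.mod_lt _ hβpos, ?_⟩
      rw [Nat.mul_comm]
      exact (Nat.div_add_mod p β).symm
    refine ⟨q, hqm, ?_⟩
    have hrl : (W (q+1)).reverse.length = ℓ := by
      rw [List.length_reverse]; exact hWlen (q+1) (by omega) (by omega)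
    rw [← List.getElem?_drop, hdropq q hqm,
      List.getElem?_append_left (by rw [hblen q hqm]; exact hoβ)] at hp
    congr 1
    by_contra hne
    rcases Nat.lt_or_ge o ℓ with h | h
    · rw [List.getElem?_append_left (by simp [hrl]; omega),
        List.getElem?_append_left (by rw [hrl]; omega),
        List.getElem?_eq_getElem (by rw [hrl]; omega)] at hp
      have h4 : (W (q+1)).reverse[o] = 4 := by
        injection hp
      have hmem : (W (q+1)).reverse[o] ∈ (W (q+1)).reverse :=
        List.getElem_mem _
      rw [List.mem_reverse] at hmem
      have := hWbin (q+1) (by omega) (by omega) _ hmem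
      omega
    · have hℓo : ℓ < o := by omega
      rw [List.getElem?_append_right (by simp [hrl]; omega)] at hp
      have h4 : 4 ∈ sEnc k q := by
        obtain ⟨hlt, hget⟩ := List.getElem?_eq_some_iff.1 hp
        exact hget ▸ List.getElem_mem hlt
      rcases sEnc_mem k q _ h4 with h | h <;> omega
  constructor
  · -- forward: j ∈ LexRange → canonical form
    rintro ⟨hj1, hjn, hle, hlt⟩
    simp only [Suf] at hle hlt
    rcases lexAux_prefix_or (X.reverse ++ [4]) (T.drop (j - 1)) with hpre | h | h
    · obtain ⟨t0, ht0⟩ := hpre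
      have h4 : T[(j - 1) + X.length]? = some 4 := by
        rw [← List.getElem?_drop, ← ht0, List.getElem?_append_left (by simp),
          List.getElem?_append_right (by simp)]
        simp
      obtain ⟨q, hqm, hpeq⟩ := hchar4 _ h4
      have hj2 : j - 1 = q * β + (ℓ - X.length) := by omega
      have hU : T.drop (j - 1) =
          (W (q+1)).reverse.drop (ℓ - X.length) ++ [4] ++ sEnc k q ++ T.drop ((q+1) * β) := by
        rw [hj2]; exact hsuf q hqm _ (by omega)
      have hDlen : ((W (q+1)).reverse.drop (ℓ - X.length)).length = X.length := by
        simp [hWlen (q+1) (by omega) (by omega)]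
        omega
      have hD : (W (q+1)).reverse.drop (ℓ - X.length) = X.reverse := by
        have h1 : (T.drop (j - 1)).take X.length = X.reverse := by
          rw [← ht0, List.append_assoc]
          exact List.take_left' (by simp)
        rw [hU, List.append_assoc, List.append_assoc,
          List.take_left' hDlen] at h1
        exact h1
      have hpre' : X <+: W (q + 1) := by
        have h2 := congrArg List.reverse hD
        rw [List.reverse_drop] at h2
        simp only [List.reverse_reverse, List.length_reverse,
          hWlen (q+1) (by omega) (by omega)] at h2
        have h3 : ℓ - (ℓ - X.length) = X.length := by omega
        rw [h3] at h2
        rw [← h2]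
        exact List.take_prefix _ _
      have hU2 : T.drop (j - 1) =
          (X.reverse ++ [4]) ++ (sEnc k q ++ T.drop ((q+1) * β)) := by
        rw [hU, hD]
        simp only [List.append_assoc]
      rw [hU2] at hle hlt
      have hq2 : q < 2 ^ k := by omega
      have hbq : b ≤ q := by
        by_contra hqb
        push_neg at hqb
        have h1 : List.Lex (·<·) (sEnc k q ++ T.drop ((q+1) * β)) (sEnc k b) :=
          lexAux_append_left ((sEncLex k q b hq2 hb2).2 hqb)
            (by simp [sEnc_length])
        rcases hle with hle | hle
        · simp only [LexLt] at hle
          rw [lexAux_append_left_iff] at hle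
          exact absurd h1 (asymm hle)
        · have h2 := List.append_cancel_left hle
          have hlen := congrArg List.length h2
          simp only [List.length_append, sEnc_length] at hlen
          have hrest : T.drop ((q+1) * β) = [] :=
            List.eq_nil_of_length_eq_zero (by omega)
          rw [hrest, List.append_nil] at h2
          exact absurd (sEnc_inj k b q hb2 hq2 h2) (by omega)
      have hqe : q < e := by
        by_contra heq
        push_neg at heq
        simp only [LexLt] at hlt
        rw [lexAux_append_left_iff] at hlt
        rcases Nat.lt_or_ge e q with h | h
        · exact absurd (lexAux_append_right ((sEncLex k e q he2 hq2).2 h)) (asymm hlt)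
        · have heq2 : e = q := by omega
          subst heq2
          exact lexAux_not_append_self _ _ hlt
      exact ⟨q, hqm, hbq, hqe, hpre', by omega⟩
    · exfalso
      rcases hle with hle | hle
      · exact absurd (h (sEnc k b)) (asymm hle)
      · have h2 := h (sEnc k b)
        rw [hle] at h2
        exact irrefl_of (List.Lex (·<·)) _ h2
    · exact absurd (h (sEnc k e)) (asymm hlt)
  · -- backward: canonical form → membership
    rintro ⟨q, hqm, hbq, hqe, hpre, rfl⟩
    have hq2 : q < 2 ^ k := by omega
    have hj2 : q * β + (ℓ - X.length) + 1 - 1 = q * β + (ℓ - X.length) := by omega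
    have hU : T.drop (q * β + (ℓ - X.length)) =
        (W (q+1)).reverse.drop (ℓ - X.length) ++ [4] ++ sEnc k q ++ T.drop ((q+1) * β) :=
      hsuf q hqm _ (by omega)
    have hD : (W (q+1)).reverse.drop (ℓ - X.length) = X.reverse := by
      obtain ⟨s, hs⟩ := hpre
      have hlenW := hWlen (q+1) (by omega) (by omega)
      rw [← hs, List.reverse_append]
      apply List.drop_left'
      rw [List.length_reverse]
      have : X.length + s.length = ℓ := by rw [← hlenW, ← hs]; simp
      omega
    have hU2 : T.drop (q * β + (ℓ - X.length)) =
        (X.reverse ++ [4]) ++ (sEnc k q ++ T.drop ((q+1) * β)) := by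
      rw [hU, hD]
      simp only [List.append_assoc]
    have hmul : (q + 1) * β = q * β + β := by ring
    have hmul2 : (q + 1) * β ≤ m * β := Nat.mul_le_mul_right _ (by omega)
    refine ⟨by omega, ?_, ?_, ?_⟩
    · rw [hTlen]; omega
    · simp only [LexLe, LexLt, Suf, hj2]
      rw [hU2]
      rcases Nat.lt_or_ge b q with h | h
      · left
        rw [lexAux_append_left_iff]
        exact lexAux_append_right ((sEncLex k b q hb2 hq2).2 h)
      · have hbq2 : b = q := by omega
        subst hbq2
        rcases eq_or_ne (T.drop ((b+1) * β)) [] with hR | hR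
        · right; rw [hR]; simp
        · left
          rw [lexAux_append_left_iff]
          exact lexAux_self_append hR
    · simp only [LexLt, Suf, hj2]
      rw [hU2, lexAux_append_left_iff]
      exact lexAux_append_left ((sEncLex k q e hq2 he2).2 hqe) (by simp [sEnc_length])
theorem stmt10 (m ℓ : ℕ) (hm : 1 ≤ m) (hℓ : 1 ≤ ℓ) (W : ℕ → List ℕ)
    (hWlen : ∀ i, 1 ≤ i → i ≤ m → (W i).length = ℓ)
    (hWbin : ∀ i, 1 ≤ i → i ≤ m → ∀ a ∈ W i, a < 2)
    (X : List ℕ) (hXlen : X.length ≤ ℓ) (hXbin : ∀ a ∈ X, a < 2)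
    (b e : ℕ) (hb : b ≤ m) (he : e ≤ m) :
    ({ i | b < i ∧ i ≤ e ∧ X <+: W i } =
      (fun j => cdiv j (ℓ + Nat.log 2 m + 2)) ''
        LexRange (X.reverse ++ [4] ++ sEnc (1 + Nat.log 2 m) b)
          (X.reverse ++ [4] ++ sEnc (1 + Nat.log 2 m) e) (SeqToString m W)) ∧
    ({ i | b < i ∧ i ≤ e ∧ X <+: W i }.ncard =
      (LexRange (X.reverse ++ [4] ++ sEnc (1 + Nat.log 2 m) b)
        (X.reverse ++ [4] ++ sEnc (1 + Nat.log 2 m) e) (SeqToString m W)).ncard) := by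
  have hkey := keyLem m ℓ (1 + Nat.log 2 m) (ℓ + Nat.log 2 m + 2) rfl rfl hm hℓ W
    hWlen hWbin X hXlen b e hb he
  have hpart1 : { i | b < i ∧ i ≤ e ∧ X <+: W i } =
      (fun j => cdiv j (ℓ + Nat.log 2 m + 2)) ''
        LexRange (X.reverse ++ [4] ++ sEnc (1 + Nat.log 2 m) b)
          (X.reverse ++ [4] ++ sEnc (1 + Nat.log 2 m) e) (SeqToString m W) := by
    ext i
    simp only [Set.mem_image, Set.mem_setOf_eq]
    constructor
    · rintro ⟨hbi, hie, hpre⟩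
      refine ⟨(i - 1) * (ℓ + Nat.log 2 m + 2) + (ℓ - X.length) + 1,
        (hkey _).2 ⟨i - 1, by omega, by omega, by omega, ?_, rfl⟩, ?_⟩
      · have h1 : i - 1 + 1 = i := by omega
        rw [h1]
        exact hpre
      · rw [cdiv_eq' _ _ _ (by omega)]
        omega
    · rintro ⟨j, hj, rfl⟩
      obtain ⟨q, hqm, hbq, hqe, hpre, rfl⟩ := (hkey _).1 hj
      rw [cdiv_eq' _ _ _ (by omega)]
      exact ⟨by omega, by omega, hpre⟩
  refine ⟨hpart1, ?_⟩
  rw [hpart1]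
  apply Set.ncard_image_of_injOn
  intro j1 h1 j2 h2 heq
  obtain ⟨q1, _, _, _, _, hj1⟩ := (hkey _).1 h1
  obtain ⟨q2, _, _, _, _, hj2⟩ := (hkey _).1 h2
  simp only at heq
  rw [hj1, hj2] at heq
  rw [cdiv_eq' _ _ _ (by omega), cdiv_eq' _ _ _ (by omega)] at heq
  have hq12 : q1 = q2 := by omega
  rw [hj1, hj2, hq12]
end

section
/- Let W[1..m] be a sequence of m ≥ 1 binary strings of length ℓ ≥ 1, let π[1..m] be a permutation of [1..m] with inverse permutation π⁻¹ (so π[π⁻¹[i]] = i for all i), let T = PermSeqToString_ℓ(π,W), k = 1 + ⌊log₂ m⌋, and β = ℓ + k + 1. Then for every X ∈ {0,1}^{≤ℓ}, letting 𝒫 = { i ∈ [1..m] : X is a prefix of W[i] }, it holds Occ(rev(X)·4, T) = { π⁻¹[i]·β − (k + |X|) : i ∈ 𝒫 }. -/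
lemma aux_len_sEnc (k i : ℕ) : (sEnc k i).length = k := by
  simp [sEnc, binSym]

lemma aux_mem_sEnc {k i a : ℕ} (h : a ∈ sEnc k i) : 2 ≤ a ∧ a ≤ 3 := by
  simp only [sEnc, binSym, List.mem_map, List.mem_range] at h
  obtain ⟨b, ⟨j, _, rfl⟩, rfl⟩ := h
  omega

lemma aux_flatten_len {α : Type*} (f : ℕ → List α) (β : ℕ) :
    ∀ m, (∀ i < m, (f i).length = β) →
      (((List.range m).map f).flatten).length = m * β := by
  intro m
  induction m with
  | zero => simp
  | succ n ih =>
    intro h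
    rw [List.range_succ, List.map_append, List.flatten_append, List.length_append,
      ih (fun i hi => h i (by omega))]
    simp [h n (by omega)]
    ring

lemma aux_flatten_split {α : Type*} (f : ℕ → List α) (m t : ℕ) (ht : t ≤ m) :
    ((List.range m).map f).flatten =
      ((List.range t).map f).flatten
        ++ ((List.range (m - t)).map fun i => f (t + i)).flatten := by
  conv_lhs => rw [show m = t + (m - t) by omega]
  rw [List.range_add, List.map_append, List.flatten_append, List.map_map]
  rfl

lemma aux_drop_flatten {α : Type*} (f : ℕ → List α) (β m t : ℕ) (ht : t < m)
    (hlen : ∀ i < m, (f i).length = β) :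
    ∃ rest, (((List.range m).map f).flatten).drop (t * β) = f t ++ rest := by
  refine ⟨((List.range (m - (t + 1))).map fun i => f (t + 1 + i)).flatten, ?_⟩
  rw [aux_flatten_split f m (t + 1) ht, List.range_succ, List.map_append,
    List.flatten_append]
  have hA : (((List.range t).map f).flatten).length = t * β :=
    aux_flatten_len f β t (fun i hi => hlen i (by omega))
  rw [List.append_assoc, ← hA, List.drop_left]
  simp

theorem stmt13 (m ℓ : ℕ) (hm : 1 ≤ m) (hℓ : 1 ≤ ℓ) (W : ℕ → List ℕ)
    (hWlen : ∀ i, 1 ≤ i → i ≤ m → (W i).length = ℓ)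
    (hWbin : ∀ i, 1 ≤ i → i ≤ m → ∀ a ∈ W i, a < 2)
    (perm permInv : ℕ → ℕ)
    (hperm : ∀ i, 1 ≤ i → i ≤ m → 1 ≤ perm i ∧ perm i ≤ m)
    (hpermInv : ∀ i, 1 ≤ i → i ≤ m →
      1 ≤ permInv i ∧ permInv i ≤ m ∧ perm (permInv i) = i)
    (hInvPerm : ∀ i, 1 ≤ i → i ≤ m → permInv (perm i) = i)
    (X : List ℕ) (hXlen : X.length ≤ ℓ) (hXbin : ∀ a ∈ X, a < 2) :
    Occ (X.reverse ++ [4]) (PermSeqToString m perm W) =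
      (fun i => permInv i * (ℓ + (1 + Nat.log 2 m) + 1) - ((1 + Nat.log 2 m) + X.length)) ''
        { i | 1 ≤ i ∧ i ≤ m ∧ X <+: W i } := by
  classical
  obtain ⟨k, hk⟩ : ∃ k, k = 1 + Nat.log 2 m := ⟨_, rfl⟩
  obtain ⟨β, hβ⟩ : ∃ b, b = ℓ + k + 1 := ⟨_, rfl⟩
  obtain ⟨n, hn⟩ : ∃ n, n = X.length := ⟨_, rfl⟩
  obtain ⟨F, hF⟩ : ∃ F : ℕ → List ℕ,
      F = fun i => (W (perm (i + 1))).reverse ++ [4] ++ sEnc k (perm (i + 1) - 1) :=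
    ⟨_, rfl⟩
  obtain ⟨T, hT⟩ : ∃ T, T = ((List.range m).map F).flatten := ⟨_, rfl⟩
  have hTP : PermSeqToString m perm W = T := by rw [hT, hF, hk]; rfl
  have hk1 : 1 ≤ k := by omega
  have hnl : n ≤ ℓ := by omega
  have hβpos : 0 < β := by omega
  have hFlen : ∀ t < m, (F t).length = β := by
    intro t ht
    have h1 := (hperm (t + 1) (by omega) (by omega)).1
    have h2 := (hperm (t + 1) (by omega) (by omega)).2
    simp only [hF, List.length_append, List.length_reverse, List.length_cons,
      List.length_nil, aux_len_sEnc, hWlen _ h1 h2]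
    omega
  have hTlen : T.length = m * β := by rw [hT]; exact aux_flatten_len F β m hFlen
  have hPlen : (X.reverse ++ [4]).length = n + 1 := by
    simp only [List.length_append, List.length_reverse, List.length_cons,
      List.length_nil]
    omega
  have hcomp : ∀ t < m, (T.drop (t * β + (ℓ - n))).take (n + 1)
      = ((W (perm (t + 1))).take n).reverse ++ [4] := by
    intro t ht
    obtain ⟨rest, hrest⟩ := aux_drop_flatten F β m t ht hFlen
    rw [← hT] at hrest
    have h1 := (hperm (t + 1) (by omega) (by omega)).1
    have h2 := (hperm (t + 1) (by omega) (by omega)).2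
    have hWl : (W (perm (t + 1))).length = ℓ := hWlen _ h1 h2
    rw [← List.drop_drop, hrest]
    simp only [hF]
    rw [List.append_assoc, List.append_assoc,
      List.drop_append_of_le_length (by rw [List.length_reverse, hWl]; omega)]
    have hdlen : ((W (perm (t + 1))).reverse.drop (ℓ - n)).length = n := by
      rw [List.length_drop, List.length_reverse, hWl]; omega
    rw [show n + 1 = ((W (perm (t + 1))).reverse.drop (ℓ - n)).length + 1
        from by rw [hdlen],
      List.take_length_add_append]
    have h4 : ([4] ++ (sEnc k (perm (t + 1) - 1) ++ rest)).take 1 = [4] := rfl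
    rw [h4]
    have htk : ((W (perm (t + 1))).take n).reverse
        = (W (perm (t + 1))).reverse.drop (ℓ - n) := by
      rw [List.reverse_take, hWl]
    rw [htk]
  rw [hTP]
  ext j
  simp only [Occ, Set.mem_setOf_eq, Set.mem_image]
  constructor
  · rintro ⟨hj1, hjle, htake⟩
    rw [hPlen] at htake hjle
    rw [hTlen] at hjle
    have hsuf : Suf T j = T.drop (j - 1) := rfl
    rw [hsuf] at htake
    obtain ⟨p, hp⟩ : ∃ p, p = (j - 1) + n := ⟨_, rfl⟩
    have hpm : p < m * β := by omega
    have hTp : T[p]? = some 4 := by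
      rw [hp, ← List.getElem?_drop]
      have h1 : (T.drop (j - 1))[n]? = ((T.drop (j - 1)).take (n + 1))[n]? := by
        rw [List.getElem?_take]; simp
      rw [h1, htake, List.getElem?_append_right (by rw [List.length_reverse]; omega)]
      rw [List.length_reverse]
      rw [show n - X.length = 0 from by omega]
      rfl
    obtain ⟨t, r, hrβ, htm, hpr, hmle⟩ :
        ∃ t r, r < β ∧ t < m ∧ p = t * β + r ∧ t * β + β ≤ m * β := by
      have h1 : p % β < β := Nat.mod_lt _ hβpos
      have h2 := Nat.div_add_mod p β
      have hpm' : p < β * m := by rw [Nat.mul_comm]; exact hpm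
      have h3 : p / β < m := Nat.div_lt_of_lt_mul hpm'
      have h4 : (p / β + 1) * β ≤ m * β := Nat.mul_le_mul_right β (by omega)
      have h5 : (p / β + 1) * β = p / β * β + β := by ring
      have h6 : p / β * β = β * (p / β) := Nat.mul_comm _ _
      exact ⟨p / β, p % β, h1, h3, by omega, by omega⟩
    obtain ⟨rest, hrest⟩ := aux_drop_flatten F β m t htm hFlen
    rw [← hT] at hrest
    have h1 := (hperm (t + 1) (by omega) (by omega)).1
    have h2 := (hperm (t + 1) (by omega) (by omega)).2
    have hWl : (W (perm (t + 1))).length = ℓ := hWlen _ h1 h2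
    have hFr : (F t)[r]? = some 4 := by
      rw [hpr, ← List.getElem?_drop, hrest,
        List.getElem?_append_left (by rw [hFlen t htm]; omega)] at hTp
      exact hTp
    have hrℓ : r = ℓ := by
      rcases lt_trichotomy r ℓ with hlt | heq | hgt
      · exfalso
        simp only [hF] at hFr
        rw [List.getElem?_append_left (by
            simp only [List.length_append, List.length_reverse, List.length_cons,
              List.length_nil, hWl]; omega),
          List.getElem?_append_left (by rw [List.length_reverse, hWl]; omega)] at hFr
        have hmem := List.mem_of_getElem? hFr
        rw [List.mem_reverse] at hmem
        have := hWbin _ h1 h2 _ hmem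
        omega
      · exact heq
      · exfalso
        simp only [hF] at hFr
        rw [List.getElem?_append_right (by
            simp only [List.length_append, List.length_reverse, List.length_cons,
              List.length_nil, hWl]; omega)] at hFr
        have := aux_mem_sEnc (List.mem_of_getElem? hFr)
        omega
    have hj1eq : j - 1 = t * β + (ℓ - n) := by omega
    have hcm := hcomp t htm
    rw [← hj1eq] at hcm
    have hXeq : (W (perm (t + 1))).take n = X := by
      have h := htake.symm.trans hcm
      have h2' := List.append_cancel_right h
      rw [List.reverse_inj] at h2'
      exact h2'.symm
    refine ⟨perm (t + 1), ⟨h1, h2, ?_⟩, ?_⟩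
    · rw [← hXeq]; exact List.take_prefix _ _
    · rw [hInvPerm (t + 1) (by omega) (by omega), ← hk, ← hβ, ← hn]
      have hmul3 : (t + 1) * β = t * β + β := by ring
      omega
  · rintro ⟨i, ⟨hi1, him, hpre⟩, rfl⟩
    obtain ⟨hpi1, hpim, hppi⟩ := hpermInv i hi1 him
    obtain ⟨t, htdef⟩ : ∃ t, t = permInv i - 1 := ⟨_, rfl⟩
    have htm : t < m := by omega
    have ht1 : t + 1 = permInv i := by omega
    have hmul : permInv i * β = t * β + β := by rw [← ht1]; ring
    have hmul2 : (t + 1) * β ≤ m * β := Nat.mul_le_mul_right β (by omega)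
    have hmul3 : (t + 1) * β = t * β + β := by ring
    have hjeq : permInv i * (ℓ + (1 + Nat.log 2 m) + 1)
        - ((1 + Nat.log 2 m) + X.length) = t * β + (ℓ - n) + 1 := by
      rw [← hk, ← hβ, ← hn]
      omega
    rw [hjeq]
    refine ⟨by omega, ?_, ?_⟩
    · rw [hPlen, hTlen]; omega
    · have hsuf : Suf T (t * β + (ℓ - n) + 1) = T.drop (t * β + (ℓ - n)) := by
        simp [Suf]
      rw [hsuf, hPlen]
      have hcm := hcomp t htm
      have hWi : perm (t + 1) = i := by rw [ht1, hppi]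
      rw [hWi] at hcm
      have hXeq : (W i).take X.length = X := (List.prefix_iff_eq_take.mp hpre).symm
      rw [hcm, hn, hXeq]
end

section
/- Let W[1..m] be a sequence of m ≥ 1 binary strings of length ℓ ≥ 1, let π[1..m] be a permutation of [1..m], with s(i) as in the definition of PermSeqToString, and let T = PermSeqToString_ℓ(π,W). Fix X ∈ {0,1}^{≤ℓ} and b, e ∈ [0..m], and set P₁ = rev(X)·4·s(b), P₂ = rev(X)·4·s(e), and β = ℓ + ⌊log₂ m⌋ + 2. Let 𝒫 = { i ∈ (b..e] : X is a prefix of W[i] } and 𝒬 = { ⌈ j / β ⌉ : j ∈ LexRange(P₁,P₂,T) }. Then 𝒫 = { π[q] : q ∈ 𝒬 }. -/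
namespace Stmt14Aux

lemma not_lt_nil (l : List ℕ) : ¬ l < ([] : List ℕ) := by
  intro h
  have h' : List.Lex (· < ·) l [] := h
  cases h'

lemma cons_lt_iff (a b : ℕ) (u v : List ℕ) :
    (a :: u : List ℕ) < b :: v ↔ a < b ∨ (a = b ∧ u < v) := by
  constructor
  · intro h
    have h' : List.Lex (· < ·) (a :: u) (b :: v) := h
    cases h' with
    | cons h => exact Or.inr ⟨rfl, h⟩
    | rel h => exact Or.inl h
  · rintro (h | ⟨rfl, h⟩)
    · exact List.Lex.rel h
    · exact List.Lex.cons h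

lemma append_lt_append_iff (a b u v : List ℕ) (h : a.length = b.length) :
    a ++ u < b ++ v ↔ a < b ∨ (a = b ∧ u < v) := by
  induction a generalizing b with
  | nil =>
    cases b with
    | nil => simp [not_lt_nil]
    | cons y b => simp at h
  | cons x a ih =>
    cases b with
    | nil => simp at h
    | cons y b =>
      simp only [List.cons_append, cons_lt_iff, List.cons.injEq]
      rw [ih b (by simpa using h)]
      constructor
      · rintro (hh | ⟨rfl, (hh | ⟨rfl, hh⟩)⟩)
        · exact Or.inl (Or.inl hh)
        · exact Or.inl (Or.inr ⟨rfl, hh⟩)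
        · exact Or.inr ⟨⟨rfl, rfl⟩, hh⟩
      · rintro ((hh | ⟨rfl, hh⟩) | ⟨⟨rfl, rfl⟩, hh⟩)
        · exact Or.inl hh
        · exact Or.inr ⟨rfl, Or.inl hh⟩
        · exact Or.inr ⟨rfl, Or.inr ⟨rfl, hh⟩⟩

lemma append_eq_append_iff_of_len (a b u v : List ℕ) (h : a.length = b.length) :
    a ++ u = b ++ v ↔ a = b ∧ u = v := by
  constructor
  · intro he; exact List.append_inj he h
  · rintro ⟨rfl, rfl⟩; rfl

lemma append_le_append_iff (a b u v : List ℕ) (h : a.length = b.length) :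
    a ++ u ≤ b ++ v ↔ a < b ∨ (a = b ∧ u ≤ v) := by
  rw [le_iff_lt_or_eq, append_lt_append_iff a b u v h, append_eq_append_iff_of_len a b u v h]
  constructor
  · rintro ((h1 | ⟨rfl, h1⟩) | ⟨rfl, rfl⟩)
    · exact Or.inl h1
    · exact Or.inr ⟨rfl, le_of_lt h1⟩
    · exact Or.inr ⟨rfl, le_refl _⟩
  · rintro (h1 | ⟨rfl, h1⟩)
    · exact Or.inl (Or.inl h1)
    · rcases lt_or_eq_of_le h1 with h2 | rfl
      · exact Or.inl (Or.inr ⟨rfl, h2⟩)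
      · exact Or.inr ⟨rfl, rfl⟩

lemma between_prefix (C u v Y : List ℕ) (h1 : C ++ u ≤ Y) (h2 : Y < C ++ v) :
    ∃ w, Y = C ++ w := by
  induction C generalizing Y with
  | nil => exact ⟨Y, rfl⟩
  | cons c C ih =>
    cases Y with
    | nil =>
      exfalso
      have : (c :: (C ++ u) : List ℕ) = [] := le_antisymm h1 (le_of_lt (List.nil_lt_cons _ _))
      simp at this
    | cons y Y =>
      have h1' : c < y ∨ (c = y ∧ C ++ u ≤ Y) := by
        rcases lt_or_eq_of_le h1 with ha | ha
        · rcases (cons_lt_iff c y (C ++ u) Y).mp ha with hb | ⟨hb, hc⟩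
          · exact Or.inl hb
          · exact Or.inr ⟨hb, le_of_lt hc⟩
        · simp only [List.cons_append, List.cons.injEq] at ha
          exact Or.inr ⟨ha.1, le_of_eq ha.2⟩
      rcases (cons_lt_iff y c Y (C ++ v)).mp h2 with hd | ⟨hd, he⟩
      · rcases h1' with h' | ⟨h'', _⟩
        · exact absurd hd (not_lt_of_gt h')
        · exact absurd hd (by rw [h'']; exact lt_irrefl _)
      · rcases h1' with h' | ⟨h'', h1''⟩
        · exact absurd h' (by rw [hd]; exact lt_irrefl _)
        · obtain ⟨w, rfl⟩ := ih Y h1'' he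
          exact ⟨w, hd ▸ rfl⟩


lemma binSym_length (k x : ℕ) : (binSym k x).length = k := by simp [binSym]

lemma sEnc_length (k x : ℕ) : (sEnc k x).length = k := by simp [sEnc, binSym_length]

lemma binSym_mem (k x : ℕ) : ∀ a ∈ binSym k x, a < 2 := by
  simp only [binSym, List.mem_map, List.mem_range]
  rintro a ⟨i, -, rfl⟩
  exact Nat.mod_lt _ (by norm_num)

lemma sEnc_mem (k x : ℕ) : ∀ a ∈ sEnc k x, a = 2 ∨ a = 3 := by
  simp only [sEnc, List.mem_map]
  rintro a ⟨b, hb, rfl⟩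
  have := binSym_mem k x b hb
  omega

lemma mod_pow_div_mod (x e k : ℕ) (h : e < k) :
    x % 2^k / 2^e % 2 = x / 2^e % 2 := by
  have h1 : (2:ℕ)^k = 2^e * 2^(k-e) := by
    rw [← pow_add]
    congr 1
    omega
  rw [h1, Nat.mod_mul_right_div_self]
  exact Nat.mod_mod_of_dvd _ (dvd_pow_self 2 (by omega : k - e ≠ 0))

lemma binSym_succ (k x : ℕ) : binSym (k+1) x = (x / 2^k % 2) :: binSym k (x % 2^k) := by
  unfold binSym
  rw [List.range_succ_eq_map, List.map_cons, List.map_map]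
  congr 1
  apply List.map_congr_left
  intro i hi
  simp only [List.mem_range] at hi
  simp only [Function.comp_apply, Nat.succ_sub_one]
  show x / 2 ^ (k + 1 - 1 - (i+1)) % 2 = x % 2 ^ k / 2 ^ (k - 1 - i) % 2
  have he2 : k + 1 - 1 - (i + 1) = k - 1 - i := by omega
  rw [he2]
  have hlt : k - 1 - i < k := by omega
  exact (mod_pow_div_mod x (k - 1 - i) k hlt).symm


lemma binSym_lt_iff (k x y : ℕ) (hx : x < 2^k) (hy : y < 2^k) :
    binSym k x < binSym k y ↔ x < y := by
  induction k generalizing x y with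
  | zero =>
    simp only [pow_zero, Nat.lt_one_iff] at hx hy
    subst hx; subst hy
    simp [binSym, not_lt_nil]
  | succ k ih =>
    rw [binSym_succ, binSym_succ, cons_lt_iff,
      ih (x % 2^k) (y % 2^k) (Nat.mod_lt _ (by positivity)) (Nat.mod_lt _ (by positivity))]
    have hx2 : x / 2^k < 2 := Nat.div_lt_of_lt_mul (by rw [← pow_succ]; exact hx)
    have hy2 : y / 2^k < 2 := Nat.div_lt_of_lt_mul (by rw [← pow_succ]; exact hy)
    rw [Nat.mod_eq_of_lt hx2, Nat.mod_eq_of_lt hy2]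
    have dx := Nat.div_add_mod x (2^k)
    have dy := Nat.div_add_mod y (2^k)
    have mx : x % 2^k < 2^k := Nat.mod_lt _ (by positivity)
    have my : y % 2^k < 2^k := Nat.mod_lt _ (by positivity)
    set a := x / 2^k with ha
    set b := y / 2^k with hb
    interval_cases a <;> interval_cases b <;> omega

lemma map_add2_lt (u v : List ℕ) : u.map (· + 2) < v.map (· + 2) ↔ u < v := by
  induction u generalizing v with
  | nil =>
    cases v with
    | nil => simp
    | cons y v => simp only [List.map_nil, List.map_cons]
                  exact ⟨fun _ => List.nil_lt_cons _ _, fun _ => List.nil_lt_cons _ _⟩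
  | cons x u ih =>
    cases v with
    | nil =>
      simp only [List.map_cons, List.map_nil]
      exact ⟨fun h => absurd h (not_lt_nil _), fun h => absurd h (not_lt_nil _)⟩
    | cons y v =>
      simp only [List.map_cons, cons_lt_iff, ih v]
      constructor
      · rintro (h | ⟨h, h'⟩)
        · exact Or.inl (by omega)
        · exact Or.inr ⟨by omega, h'⟩
      · rintro (h | ⟨h, h'⟩)
        · exact Or.inl (by omega)
        · exact Or.inr ⟨by omega, h'⟩

lemma sEnc_lt_iff (k x y : ℕ) (hx : x < 2^k) (hy : y < 2^k) :
    sEnc k x < sEnc k y ↔ x < y := by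
  unfold sEnc
  rw [map_add2_lt, binSym_lt_iff k x y hx hy]

lemma sEnc_eq_iff (k x y : ℕ) (hx : x < 2^k) (hy : y < 2^k) :
    sEnc k x = sEnc k y ↔ x = y := by
  constructor
  · intro h
    rcases lt_trichotomy x y with h' | h' | h'
    · exact absurd ((sEnc_lt_iff k x y hx hy).mpr h') (by rw [h]; exact lt_irrefl _)
    · exact h'
    · exact absurd ((sEnc_lt_iff k y x hy hx).mpr h') (by rw [h]; exact lt_irrefl _)
  · rintro rfl; rfl

lemma flatten_len (g : ℕ → List ℕ) (β m : ℕ) (hlen : ∀ i < m, (g i).length = β) :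
    (((List.range m).map g).flatten).length = m * β := by
  rw [List.length_flatten, List.map_map]
  rw [List.map_congr_left (f := List.length ∘ g) (g := Function.const ℕ β)
    (fun i hi => hlen i (List.mem_range.mp hi))]
  rw [List.map_const, List.sum_replicate, List.length_range, smul_eq_mul]

lemma flatten_drop_mul (g : ℕ → List ℕ) (β m q : ℕ)
    (hlen : ∀ i < m, (g i).length = β) (hq : q ≤ m) :
    (((List.range m).map g).flatten).drop (q * β)
      = ((List.range (m - q)).map (fun i => g (q + i))).flatten := by
  induction q with
  | zero => simp
  | succ q ih =>
    have hq' : q ≤ m := by omega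
    rw [show (q+1)*β = q*β + β by ring, ← List.drop_drop, ih hq']
    have hn : m - q = (m - (q+1)) + 1 := by omega
    rw [hn, List.range_succ_eq_map, List.map_cons, List.flatten_cons,
      List.drop_append]
    have hlq : (g (q + 0)).length = β := hlen _ (by omega)
    rw [hlq, List.drop_eq_nil_of_le (le_of_eq hlq), Nat.sub_self, List.drop_zero,
      List.nil_append, List.map_map]
    congr 1
    apply List.map_congr_left
    intro i hi
    show g (q + (i+1)) = g (q + 1 + i)
    congr 1
    omega

lemma flatten_drop (g : ℕ → List ℕ) (β m q r : ℕ)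
    (hlen : ∀ i < m, (g i).length = β) (hq : q < m) (hr : r ≤ β) :
    (((List.range m).map g).flatten).drop (q * β + r)
      = (g q).drop r ++ ((List.range (m - (q+1))).map (fun i => g (q + 1 + i))).flatten := by
  rw [← List.drop_drop, flatten_drop_mul g β m q hlen (le_of_lt hq)]
  have hn : m - q = (m - (q+1)) + 1 := by omega
  rw [hn, List.range_succ_eq_map, List.map_cons, List.flatten_cons,
    List.drop_append]
  have hlq : (g (q + 0)).length = β := hlen _ (by omega)
  rw [hlq, show r - β = 0 by omega, List.drop_zero, List.map_map, Nat.add_zero]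
  congr 1
  congr 1
  apply List.map_congr_left
  intro i hi
  show g (q + (i+1)) = g (q + 1 + i)
  congr 1
  omega

lemma append_lt_cancel (C u v : List ℕ) : C ++ u < C ++ v ↔ u < v := by
  rw [append_lt_append_iff C C u v rfl]
  simp [lt_irrefl]

lemma append_le_cancel (C u v : List ℕ) : C ++ u ≤ C ++ v ↔ u ≤ v := by
  rw [append_le_append_iff C C u v rfl]
  simp [lt_irrefl]

lemma mem_of_getElem?_aux (l : List ℕ) (n a : ℕ) (h : l[n]? = some a) : a ∈ l := by
  have hn : n < l.length := by
    by_contra hc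
    rw [List.getElem?_eq_none (by omega)] at h
    simp at h
  rw [List.getElem?_eq_getElem hn] at h
  simp only [Option.some.injEq] at h
  exact h ▸ List.getElem_mem hn

end Stmt14Aux

theorem stmt14 (m ℓ : ℕ) (hm : 1 ≤ m) (hℓ : 1 ≤ ℓ) (W : ℕ → List ℕ)
    (hWlen : ∀ i, 1 ≤ i → i ≤ m → (W i).length = ℓ)
    (hWbin : ∀ i, 1 ≤ i → i ≤ m → ∀ a ∈ W i, a < 2)
    (perm permInv : ℕ → ℕ)
    (hperm : ∀ i, 1 ≤ i → i ≤ m → 1 ≤ perm i ∧ perm i ≤ m)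
    (hpermInv : ∀ i, 1 ≤ i → i ≤ m →
      1 ≤ permInv i ∧ permInv i ≤ m ∧ perm (permInv i) = i)
    (hInvPerm : ∀ i, 1 ≤ i → i ≤ m → permInv (perm i) = i)
    (X : List ℕ) (hXlen : X.length ≤ ℓ) (hXbin : ∀ a ∈ X, a < 2)
    (b e : ℕ) (hb : b ≤ m) (he : e ≤ m) :
    { i | b < i ∧ i ≤ e ∧ X <+: W i } =
      perm '' ((fun j => cdiv j (ℓ + Nat.log 2 m + 2)) ''
        LexRange (X.reverse ++ [4] ++ sEnc (1 + Nat.log 2 m) b)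
          (X.reverse ++ [4] ++ sEnc (1 + Nat.log 2 m) e)
          (PermSeqToString m perm W)) := by
  classical
  open Stmt14Aux in
  set k := 1 + Nat.log 2 m with hk
  set β := ℓ + Nat.log 2 m + 2 with hβdef
  set g : ℕ → List ℕ :=
    fun i => (W (perm (i+1))).reverse ++ [4] ++ sEnc k (perm (i+1) - 1) with hg
  set T := PermSeqToString m perm W with hTdef
  have hT : T = ((List.range m).map g).flatten := rfl
  have hβpos : 0 < β := by omega
  have hβk : β = ℓ + 1 + k := by omega
  have hm2k : m < 2 ^ k := by
    have h1 := Nat.lt_pow_succ_log_self (by norm_num : (1:ℕ) < 2) m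
    have h2 : (2:ℕ) ^ (Nat.log 2 m).succ = 2 ^ k := by rw [hk, Nat.add_comm]
    omega
  have hLe : ∀ u v : List ℕ, LexLe u v ↔ u ≤ v := by
    intro u v
    unfold LexLe LexLt
    rw [le_iff_lt_or_eq]
    exact Iff.rfl
  have hLt : ∀ u v : List ℕ, LexLt u v ↔ u < v := fun u v => Iff.rfl
  have hglen : ∀ i < m, (g i).length = β := by
    intro i hi
    have hp := hperm (i+1) (by omega) (by omega)
    simp only [hg, List.length_append, List.length_reverse, List.length_singleton,
      hWlen (perm (i+1)) hp.1 hp.2, Stmt14Aux.sEnc_length]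
    omega
  have hTlen : T.length = m * β := by
    rw [hT]; exact Stmt14Aux.flatten_len g β m hglen
  -- the suffix starting at the canonical position of block q
  have hsuf : ∀ q, q < m →
      T.drop (q * β + (ℓ - X.length))
        = ((W (perm (q+1))).take X.length).reverse ++ [4]
          ++ (sEnc k (perm (q+1) - 1)
            ++ ((List.range (m - (q+1))).map (fun i => g (q + 1 + i))).flatten) := by
    intro q hq
    rw [hT, Stmt14Aux.flatten_drop g β m q (ℓ - X.length) hglen hq (by omega)]
    have hp := hperm (q+1) (by omega) (by omega)
    have hWl : (W (perm (q+1))).length = ℓ := hWlen _ hp.1 hp.2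
    show ((W (perm (q+1))).reverse ++ [4] ++ sEnc k (perm (q+1) - 1)).drop (ℓ - X.length)
        ++ _ = _
    rw [List.append_assoc, List.drop_append, List.drop_reverse, hWl,
      List.length_reverse, hWl, show ℓ - (ℓ - X.length) = X.length by omega,
      show ℓ - X.length - ℓ = 0 by omega, List.drop_zero]
    simp [List.append_assoc]
  -- positions of the symbol 4
  have hfour : ∀ t, T[t]? = some 4 → ∃ q, q < m ∧ t = q * β + ℓ := by
    intro t h4
    have htlen : t < m * β := by
      by_contra hc
      rw [List.getElem?_eq_none (by rw [hTlen]; omega)] at h4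
      simp at h4
    obtain ⟨q, o, hoβ, hto⟩ : ∃ q o, o < β ∧ t = q * β + o :=
      ⟨t / β, t % β, Nat.mod_lt _ hβpos,
        by rw [Nat.mul_comm]; exact (Nat.div_add_mod t β).symm⟩
    have hqm : q < m := by
      by_contra hc
      push_neg at hc
      have h5 : m * β ≤ q * β := Nat.mul_le_mul_right β hc
      omega
    have hdrop := Stmt14Aux.flatten_drop g β m q 0 hglen hqm (by omega)
    rw [Nat.add_zero, List.drop_zero] at hdrop
    have h7 : T[t]? = (g q)[o]? := by
      rw [hto, ← List.getElem?_drop, hT, hdrop,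
        List.getElem?_append_left (by rw [hglen q hqm]; exact hoβ)]
    rw [h7] at h4
    have hp := hperm (q+1) (by omega) (by omega)
    have hWl : (W (perm (q+1))).length = ℓ := hWlen _ hp.1 hp.2
    rcases lt_trichotomy o ℓ with ho | ho | ho
    · exfalso
      have h8 : (g q)[o]? = (W (perm (q+1))).reverse[o]? := by
        show ((W (perm (q+1))).reverse ++ [4] ++ sEnc k (perm (q+1) - 1))[o]? = _
        rw [List.append_assoc,
          List.getElem?_append_left (by rw [List.length_reverse, hWl]; exact ho)]
      rw [h8] at h4
      have h9 : (4:ℕ) ∈ W (perm (q+1)) :=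
        List.mem_reverse.mp (Stmt14Aux.mem_of_getElem?_aux _ _ _ h4)
      have := hWbin _ hp.1 hp.2 4 h9
      omega
    · exact ⟨q, hqm, by omega⟩
    · exfalso
      have h8 : (g q)[o]? = (sEnc k (perm (q+1) - 1))[o - ℓ - 1]? := by
        show ((W (perm (q+1))).reverse ++ [4] ++ sEnc k (perm (q+1) - 1))[o]? = _
        rw [List.getElem?_append_right
            (by rw [List.length_append, List.length_reverse, hWl]; simpa using ho),
          List.length_append, List.length_reverse, hWl]
        congr 1
      rw [h8] at h4
      have h9 := Stmt14Aux.sEnc_mem k (perm (q+1) - 1) 4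
        (Stmt14Aux.mem_of_getElem?_aux _ _ _ h4)
      omega
  -- lexicographic characterization at canonical positions
  have hYq : ∀ q, q < m → (W (perm (q+1))).take X.length = X →
      ((X.reverse ++ [4] ++ sEnc k b ≤ T.drop (q * β + (ℓ - X.length)) ∧
        T.drop (q * β + (ℓ - X.length)) < X.reverse ++ [4] ++ sEnc k e) ↔
        (b < perm (q+1) ∧ perm (q+1) ≤ e)) := by
    intro q hq hXW
    have hp := hperm (q+1) (by omega) (by omega)
    rw [hsuf q hq, hXW]
    have hb2 : b < 2 ^ k := by omega
    have he2 : e < 2 ^ k := by omega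
    have hp2 : perm (q+1) - 1 < 2 ^ k := by omega
    rw [show X.reverse ++ [4] ++ (sEnc k (perm (q+1) - 1)
          ++ ((List.range (m - (q+1))).map (fun i => g (q + 1 + i))).flatten)
        = (X.reverse ++ [4]) ++ (sEnc k (perm (q+1) - 1)
          ++ ((List.range (m - (q+1))).map (fun i => g (q + 1 + i))).flatten) from by
        simp [List.append_assoc],
      show X.reverse ++ [4] ++ sEnc k b = (X.reverse ++ [4]) ++ sEnc k b from rfl,
      show X.reverse ++ [4] ++ sEnc k e = (X.reverse ++ [4]) ++ sEnc k e from rfl,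
      Stmt14Aux.append_le_cancel, Stmt14Aux.append_lt_cancel]
    rw [show sEnc k b = sEnc k b ++ [] from by simp]
    rw [Stmt14Aux.append_le_append_iff _ _ _ _
        (by rw [Stmt14Aux.sEnc_length, Stmt14Aux.sEnc_length])]
    rw [show sEnc k e = sEnc k e ++ [] from by simp]
    rw [Stmt14Aux.append_lt_append_iff _ _ _ _
        (by rw [Stmt14Aux.sEnc_length, Stmt14Aux.sEnc_length])]
    rw [Stmt14Aux.sEnc_lt_iff k b _ hb2 hp2, Stmt14Aux.sEnc_eq_iff k b _ hb2 hp2,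
      Stmt14Aux.sEnc_lt_iff k _ e hp2 he2, Stmt14Aux.sEnc_eq_iff k _ e hp2 he2]
    constructor
    · rintro ⟨h1 | ⟨h1, -⟩, h2 | ⟨-, h2⟩⟩ <;>
        first
          | exact ⟨by omega, by omega⟩
          | exact absurd h2 (Stmt14Aux.not_lt_nil _)
    · rintro ⟨h1, h2⟩
      have hp1 : 1 ≤ perm (q+1) := hp.1
      constructor
      · rcases Nat.lt_or_ge b (perm (q+1) - 1) with h3 | h3
        · exact Or.inl h3
        · exact Or.inr ⟨by omega, by
            cases (List.map (fun i => g (q + 1 + i)) (List.range (m - (q + 1)))).flatten with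
            | nil => exact le_refl _
            | cons a l => exact le_of_lt (List.nil_lt_cons _ _)⟩
      · exact Or.inl (by omega)
  have hcdiv : ∀ q s, 1 ≤ s → s ≤ β → cdiv (q * β + s) β = q + 1 := by
    intro q s hs1 hs2
    obtain ⟨s', rfl⟩ : ∃ s', s = s' + 1 := ⟨s - 1, by omega⟩
    unfold cdiv
    rw [show q * β + (s' + 1) + β - 1 = β * (q + 1) + s' from by
      have h5 : q * β + (s' + 1) + β = β * (q + 1) + s' + 1 := by ring
      omega]
    rw [Nat.mul_add_div hβpos, Nat.div_eq_of_lt (by omega), Nat.add_zero]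
  have hchar : ∀ j, j ∈ LexRange (X.reverse ++ [4] ++ sEnc k b)
      (X.reverse ++ [4] ++ sEnc k e) T ↔
      ∃ q, q < m ∧ j = q * β + (ℓ - X.length) + 1 ∧ X <+: W (perm (q+1)) ∧
        b < perm (q+1) ∧ perm (q+1) ≤ e := by
    intro j
    simp only [LexRange, Set.mem_setOf_eq]
    constructor
    · rintro ⟨hj1, hj2, hle, hlt⟩
      rw [hLe] at hle
      rw [hLt] at hlt
      unfold Suf at hle hlt
      obtain ⟨w, hw⟩ := Stmt14Aux.between_prefix (X.reverse ++ [4]) (sEnc k b) (sEnc k e)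
        (T.drop (j-1)) hle hlt
      have h4 : (T.drop (j-1))[X.length]? = some 4 := by
        rw [hw, List.getElem?_append_left
            (by simp only [List.length_append, List.length_reverse,
              List.length_singleton]; omega),
          List.getElem?_append_right (by simp),
          List.length_reverse, Nat.sub_self]
        rfl
      rw [List.getElem?_drop] at h4
      obtain ⟨q, hqm, ht⟩ := hfour _ h4
      have hj : j = q * β + (ℓ - X.length) + 1 := by omega
      have hsufj : T.drop (j - 1) = T.drop (q * β + (ℓ - X.length)) := by
        congr 1
        omega
      have hp := hperm (q+1) (by omega) (by omega)
      have hWl : (W (perm (q+1))).length = ℓ := hWlen _ hp.1 hp.2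
      have htake : (W (perm (q+1))).take X.length = X := by
        have e1 : (T.drop (j-1)).take X.length = X.reverse := by
          rw [hw, List.append_assoc, List.take_left' (by simp)]
        have e2 : (T.drop (j-1)).take X.length
            = ((W (perm (q+1))).take X.length).reverse := by
          rw [hsufj, hsuf q hqm, List.append_assoc, List.take_left'
            (by simp [List.length_take, hWl]; omega)]
        exact List.reverse_injective (by rw [← e2, e1])
      rw [hsufj] at hle hlt
      have hbe := (hYq q hqm htake).mp ⟨hle, hlt⟩
      exact ⟨q, hqm, hj, (List.prefix_iff_eq_take).mpr htake.symm, hbe.1, hbe.2⟩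
    · rintro ⟨q, hqm, rfl, hpfx, hb', he'⟩
      have hp := hperm (q+1) (by omega) (by omega)
      have htake : (W (perm (q+1))).take X.length = X :=
        (List.prefix_iff_eq_take.mp hpfx).symm
      have hsufj : (q * β + (ℓ - X.length) + 1) - 1 = q * β + (ℓ - X.length) := by omega
      have hlex := (hYq q hqm htake).mpr ⟨hb', he'⟩
      refine ⟨by omega, ?_, ?_, ?_⟩
      · rw [hTlen]
        have h5 : (q+1) * β ≤ m * β := Nat.mul_le_mul_right β (by omega)
        have h6 : (q+1) * β = q * β + β := by ring
        omega
      · rw [hLe]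
        unfold Suf
        rw [hsufj]
        exact hlex.1
      · rw [hLt]
        unfold Suf
        rw [hsufj]
        exact hlex.2
  ext i
  simp only [Set.mem_setOf_eq, Set.mem_image]
  constructor
  · rintro ⟨hbi, hie, hpfx⟩
    have hi1 : 1 ≤ i := by omega
    have him : i ≤ m := by omega
    obtain ⟨hq1, hqm', hqi⟩ := hpermInv i hi1 him
    have hq1' : permInv i - 1 + 1 = permInv i := by omega
    refine ⟨cdiv ((permInv i - 1) * β + (ℓ - X.length) + 1) β,
      ⟨(permInv i - 1) * β + (ℓ - X.length) + 1, ?_, rfl⟩, ?_⟩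
    · rw [hchar]
      refine ⟨permInv i - 1, by omega, rfl, ?_, ?_, ?_⟩ <;> rw [hq1', hqi]
      · exact hpfx
      · exact hbi
      · exact hie
    · rw [show (permInv i - 1) * β + (ℓ - X.length) + 1
          = (permInv i - 1) * β + ((ℓ - X.length) + 1) from by omega,
        hcdiv _ _ (by omega) (by omega), hq1', hqi]
  · rintro ⟨q', ⟨j, hjmem, rfl⟩, rfl⟩
    rw [hchar] at hjmem
    obtain ⟨q, hqm, rfl, hpfx, hb', he'⟩ := hjmem
    have hcd : cdiv (q * β + (ℓ - X.length) + 1) β = q + 1 := by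
      rw [show q * β + (ℓ - X.length) + 1 = q * β + ((ℓ - X.length) + 1) from by omega]
      exact hcdiv q _ (by omega) (by omega)
    rw [hcd]
    exact ⟨hb', he', hpfx⟩
end

section
/- Let T ∈ Σⁿ, let τ ∈ [1..⌊n/2⌋], and let S be a τ-synchronizing set of T. Let P ∈ Σ^m be a τ-nonperiodic pattern with m ≥ 3τ − 1 and Occ(P[1..3τ−1], T) ≠ ∅. Then there exists a unique string D ∈ DistPrefixes(τ,T,S) that is a prefix of P. -/
lemma window_eq {α : Type*} (T P : List α) (j K δ w : ℕ) (hj : 1 ≤ j)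
    (h : (Suf T j).take K = P.take K) (hδ : δ + w ≤ K) :
    (Suf T (j + δ)).take w = (P.drop δ).take w := by
  have h1 : Suf T (j + δ) = (Suf T j).drop δ := by
    simp only [Suf, List.drop_drop]
    congr 1
    omega
  rw [h1]
  have h2 : ((Suf T j).drop δ).take w = (((Suf T j).take K).drop δ).take w := by
    rw [List.drop_take, List.take_take]
    congr 1
    omega
  rw [h2, h, List.drop_take, List.take_take]
  congr 1
  omega

lemma succ_props {α : Type*} {T : List α} {τ : ℕ} {S : Set ℕ} (hS : IsSyncSet τ T S)
    {j : ℕ} (hj1 : 1 ≤ j) (hj2 : j + 3 * τ ≤ T.length + 2) (hjR : j ∉ Rset τ T) :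
    succS S j ∈ S ∧ j ≤ succS S j ∧ succS S j < j + τ := by
  have hne : S ∩ Set.Ico j (j + τ) ≠ ∅ := by
    intro h; exact hjR ((hS.2.2 j hj1 hj2).mp h)
  obtain ⟨x, hx⟩ := Set.nonempty_iff_ne_empty.mpr hne
  have hxmem : x ∈ S ∩ Set.Ici j := ⟨hx.1, hx.2.1⟩
  have hmem := Nat.sInf_mem (⟨x, hxmem⟩ : (S ∩ Set.Ici j).Nonempty)
  have hle : sInf (S ∩ Set.Ici j) ≤ x := Nat.sInf_le hxmem
  exact ⟨hmem.1, hmem.2, lt_of_le_of_lt hle hx.2.2⟩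

lemma le_trans_d {α : Type*} (T : List α) (τ : ℕ) (S : Set ℕ)
    (hS : IsSyncSet τ T S) (P : List α)
    {j j' : ℕ} (hj1 : 1 ≤ j) (hsS : succS S j ∈ S) (hjs : j ≤ succS S j)
    (hj'1 : 1 ≤ j') (hs'S : succS S j' ∈ S) (hj's : j' ≤ succS S j')
    (Hj : (Suf T j).take (succS S j + 2*τ - j) = P.take (succS S j + 2*τ - j))
    (Hj' : (Suf T j').take (succS S j' + 2*τ - j') = P.take (succS S j' + 2*τ - j'))
    (hle : succS S j - j ≤ succS S j' - j') :
    succS S j' - j' ≤ succS S j - j := by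
  set s := succS S j with hs
  set s' := succS S j' with hs'
  set d := s - j with hd
  have hbound : s + 2*τ ≤ T.length + 1 := (hS.1 s hsS).2
  have hbound' : s' + 2*τ ≤ T.length + 1 := (hS.1 s' hs'S).2
  have e1 : (Suf T (j + d)).take (2*τ) = (P.drop d).take (2*τ) :=
    window_eq T P j (s + 2*τ - j) d (2*τ) hj1 Hj (by omega)
  have e2 : (Suf T (j' + d)).take (2*τ) = (P.drop d).take (2*τ) :=
    window_eq T P j' (s' + 2*τ - j') d (2*τ) hj'1 Hj' (by omega)
  have hjd : j + d = s := by omega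
  have hcons := hS.2.1 (j+d) (j'+d) (by omega) (by omega) (by omega) (by omega)
    (e1.trans e2.symm)
  have hmem : j' + d ∈ S := hcons.mp (by rw [hjd]; exact hsS)
  have hfin : s' ≤ j' + d := Nat.sInf_le ⟨hmem, Set.mem_Ici.mpr (Nat.le_add_right _ _)⟩
  omega

theorem stmt19 {α : Type*} (T : List α) (τ : ℕ)
    (hτ1 : 1 ≤ τ) (hτ2 : 2 * τ ≤ T.length)
    (S : Set ℕ) (hS : IsSyncSet τ T S)
    (P : List α) (hm : 3 * τ ≤ P.length + 1)
    (hP : ¬ TauPeriodic τ P)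
    (hocc : Occ (P.take (3 * τ - 1)) T ≠ ∅) :
    ∃! D, D ∈ DistPrefixes τ T S ∧ D <+: P := by
  obtain ⟨j, hj⟩ := Set.nonempty_iff_ne_empty.mpr hocc
  obtain ⟨hj1, hj2, hj3⟩ := hj
  have hmlen : (P.take (3*τ-1)).length = 3*τ-1 := by
    rw [List.length_take]; omega
  rw [hmlen] at hj2 hj3
  have hj2' : j + 3*τ ≤ T.length + 2 := by omega
  have hjR : j ∉ Rset τ T := by
    intro hmem
    apply hP
    refine ⟨hm, ?_⟩
    have h := hmem.2.2
    rwa [hj3] at h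
  obtain ⟨hsS, hjs, hslt⟩ := succ_props hS hj1 hj2' hjR
  set s := succS S j with hsdef
  have hbound : s + 2*τ ≤ T.length + 1 := (hS.1 s hsS).2
  have Hj : (Suf T j).take (s + 2*τ - j) = P.take (s + 2*τ - j) := by
    have h1 : ((Suf T j).take (3*τ-1)).take (s+2*τ-j)
        = (P.take (3*τ-1)).take (s+2*τ-j) := by rw [hj3]
    rwa [List.take_take, List.take_take,
      min_eq_left (by omega : s+2*τ-j ≤ 3*τ-1)] at h1
  refine ⟨(Suf T j).take (s + 2*τ - j), ⟨⟨j, ⟨hj1, hj2', hjR⟩, rfl⟩, ?_⟩, ?_⟩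
  · rw [Hj]; exact List.take_prefix _ _
  · rintro D' ⟨⟨j', ⟨hj'1, hj'2, hj'R⟩, rfl⟩, hpre⟩
    obtain ⟨hs'S, hj's, hs'lt⟩ := succ_props hS hj'1 hj'2 hj'R
    set s' := succS S j' with hs'def
    have hbound' : s' + 2*τ ≤ T.length + 1 := (hS.1 s' hs'S).2
    have hlen' : ((Suf T j').take (s'+2*τ-j')).length = s'+2*τ-j' := by
      simp only [Suf, List.length_take, List.length_drop]
      omega
    have Hj' : (Suf T j').take (s'+2*τ-j') = P.take (s'+2*τ-j') := by
      have h := List.prefix_iff_eq_take.mp hpre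
      rw [hlen'] at h
      exact h
    have hd : s' - j' = s - j := by
      rcases le_total (s - j) (s' - j') with h | h
      · have := le_trans_d T τ S hS P hj1 hsS hjs hj'1 hs'S hj's Hj Hj' h
        omega
      · have := le_trans_d T τ S hS P hj'1 hs'S hj's hj1 hsS hjs Hj' Hj h
        omega
    show (Suf T j').take (s' + 2*τ - j') = (Suf T j).take (s + 2*τ - j)
    rw [Hj, Hj']
    congr 1
    omega
end
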